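/- Let 1 < p₁, p₂ < ∞ and 0 < q < ∞ with 1/q > 1/p₁ + 1/p₂, and let λ = n₁/p₁' + n₂/p₂' + m/q with n₁, n₂ ≥ m. Define f_i(y_i) = χ_{\{|y_i| ≤ 1/2\}}(y_i) |y_i|^{−n_i/p_i} (log(1/|y_i|))^{−(1+ε)/p_i} on ℝ^{n_i}, where ε > 0 satisfies (1+ε)(1/p₁ + 1/p₂) q < 1. Then f_i ∈ L^{p_i}, and writing y_i = (y_{i1}, y_{i2}) ∈ ℝ^m × ℝ^{n_i−m}, the function F(x) = ∫ f₁(y₁)f₂(y₂)(|x−y_{11}|+|x−y_{21}|+|y_{12}|+|y_{22}|)^{−λ} dy₁dy₂ satisfies F(x) ≳ |x|^{−m/q}(log(1/|x|))^{−(1+ε)(1/p₁+1/p₂)} for |x| small, hence F ∉ L^q(ℝ^m). -/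

import Mathlib

open MeasureTheory ENNReal Set Metric

abbrev E (n : ℕ) : Type := EuclideanSpace ℝ (Fin n)

noncomputable def psi (m k : ℕ) : E (m + k) ≃ᵐ E m × E k :=
  ((MeasurableEquiv.toLp 2 (Fin (m+k) → ℝ)).symm).trans <|
    ((MeasurableEquiv.piCongrLeft (fun _ => ℝ) finSumFinEquiv).symm).trans <|
      ((MeasurableEquiv.sumPiEquivProdPi (fun _ : Fin m ⊕ Fin k => ℝ)).trans <|
        ((MeasurableEquiv.toLp 2 (Fin m → ℝ)).symm.symm.prodCongr
          (MeasurableEquiv.toLp 2 (Fin k → ℝ)).symm.symm))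

lemma psi_mp (m k : ℕ) : MeasurePreserving (psi m k) volume volume := by
  have h1 := EuclideanSpace.volume_preserving_symm_measurableEquiv_toLp (Fin (m+k))
  have h2 := (volume_measurePreserving_piCongrLeft (fun _ : Fin (m+k) => ℝ) finSumFinEquiv).symm
    (MeasurableEquiv.piCongrLeft (fun _ => ℝ) finSumFinEquiv)
  have h3 := (volume_measurePreserving_sumPiEquivProdPi_symm (fun _ : Fin m ⊕ Fin k => ℝ)).symm
    ((MeasurableEquiv.sumPiEquivProdPi (fun _ : Fin m ⊕ Fin k => ℝ)).symm)
  rw [MeasurableEquiv.symm_symm] at h3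
  have h4 := ((EuclideanSpace.volume_preserving_symm_measurableEquiv_toLp (Fin m)).symm
    (MeasurableEquiv.toLp 2 (Fin m → ℝ)).symm).prod
    ((EuclideanSpace.volume_preserving_symm_measurableEquiv_toLp (Fin k)).symm
    (MeasurableEquiv.toLp 2 (Fin k → ℝ)).symm)
  exact ((h4.comp h3).comp h2).comp h1

lemma psi_norm (m k : ℕ) (z : E (m + k)) :
    ‖z‖ = Real.sqrt (‖(psi m k z).1‖^2 + ‖(psi m k z).2‖^2) := by
  have e1 : ‖(psi m k z).1‖^2 = ∑ i : Fin m, ‖(psi m k z).1 i‖^2 := by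
    rw [EuclideanSpace.norm_eq, Real.sq_sqrt (by positivity)]
  have e2 : ‖(psi m k z).2‖^2 = ∑ j : Fin k, ‖(psi m k z).2 j‖^2 := by
    rw [EuclideanSpace.norm_eq, Real.sq_sqrt (by positivity)]
  rw [EuclideanSpace.norm_eq, e1, e2]
  congr 1
  rw [← Equiv.sum_comp finSumFinEquiv (fun i => ‖z i‖^2), Fintype.sum_sum_type]
  rfl

/-- transfer a radial lintegral from the product to `E (m+k)`. -/
lemma lintegral_radial (m k : ℕ) (g : ℝ → ℝ≥0∞) :
    ∫⁻ y : E m × E k, g (Real.sqrt (‖y.1‖^2 + ‖y.2‖^2)) = ∫⁻ z : E (m + k), g ‖z‖ := by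
  rw [← (psi_mp m k).lintegral_comp_emb (psi m k).measurableEmbedding
    (fun y => g (Real.sqrt (‖y.1‖^2 + ‖y.2‖^2)))]
  exact lintegral_congr fun z => by rw [← psi_norm]

lemma vol_radial (m k : ℕ) (P : ℝ → Prop)
    (hP : MeasurableSet {y : E m × E k | P (Real.sqrt (‖y.1‖^2 + ‖y.2‖^2))}) :
    volume {y : E m × E k | P (Real.sqrt (‖y.1‖^2 + ‖y.2‖^2))}
      = volume {z : E (m + k) | P ‖z‖} := by
  rw [← (psi_mp m k).measure_preimage hP.nullMeasurableSet]
  congr 1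
  ext z
  simp only [Set.mem_preimage, Set.mem_setOf_eq, ← psi_norm]

lemma finite_int (n : ℕ) (hn : 0 < n) (s : ℝ) (hs : 1 < s) :
    ∫⁻ z : E n, ENNReal.ofReal
      (if ‖z‖ ≤ 1/2 then ‖z‖ ^ (-(n:ℝ)) * Real.log (1/‖z‖) ^ (-s) else 0) < ⊤ := by
  haveI : Nonempty (Fin n) := Fin.pos_iff_nonempty.mp hn
  set V : ℝ := Real.sqrt Real.pi ^ n / Real.Gamma (n/2 + 1) with hV
  have hVpos : 0 < V := by
    apply div_pos (pow_pos (Real.sqrt_pos.2 Real.pi_pos) n)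
    exact Real.Gamma_pos_of_pos (by positivity)
  set g : E n → ℝ≥0∞ := fun z => ENNReal.ofReal
    (if ‖z‖ ≤ 1/2 then ‖z‖ ^ (-(n:ℝ)) * Real.log (1/‖z‖) ^ (-s) else 0) with hg
  set B : Set (E n) := {z | 1/2 < ‖z‖} with hB
  set A : ℕ → Set (E n) := fun j => {z | ‖z‖ ∈ Set.Ioc ((1/2:ℝ)^(j+2)) ((1/2:ℝ)^(j+1))} with hA
  have hBm : MeasurableSet B := (isOpen_lt continuous_const continuous_norm).measurableSet
  have hAm : ∀ j, MeasurableSet (A j) := fun j =>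
    measurable_norm measurableSet_Ioc
  have hcover : (B ∪ {0}) ∪ ⋃ j, A j = Set.univ := by
    apply Set.eq_univ_of_forall
    intro z
    by_cases h1 : 1/2 < ‖z‖
    · exact Or.inl (Or.inl h1)
    by_cases h0 : z = 0
    · exact Or.inl (Or.inr h0)
    right
    push_neg at h1
    have hz0 : 0 < ‖z‖ := norm_pos_iff.mpr h0
    have hex : ∃ j, (1/2:ℝ)^(j+2) < ‖z‖ := by
      obtain ⟨j, hj⟩ := exists_pow_lt_of_lt_one hz0 (by norm_num : (1/2:ℝ) < 1)
      exact ⟨j, lt_of_le_of_lt (pow_le_pow_of_le_one (by norm_num) (by norm_num) (by omega)) hj⟩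
    classical
    let j := Nat.find hex
    refine Set.mem_iUnion.mpr ⟨j, Nat.find_spec hex, ?_⟩
    rcases Nat.eq_zero_or_pos j with hj0 | hj0
    · rw [hj0]; simpa using h1
    · have := Nat.find_min hex (m := j - 1) (by omega)
      push_neg at this
      calc ‖z‖ ≤ (1/2:ℝ)^(j-1+2) := this
        _ = (1/2:ℝ)^(j+1) := by congr 1; omega
  calc ∫⁻ z, g z = ∫⁻ z in (B ∪ {0}) ∪ ⋃ j, A j, g z := by rw [hcover, setLIntegral_univ]
    _ ≤ (∫⁻ z in B ∪ {0}, g z) + ∫⁻ z in ⋃ j, A j, g z := lintegral_union_le _ _ _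
    _ ≤ ((∫⁻ z in B, g z) + ∫⁻ z in {0}, g z) + ∑' j, ∫⁻ z in A j, g z :=
        add_le_add (lintegral_union_le _ _ _) (lintegral_iUnion_le _ _)
    _ < ⊤ := by
        have hB0 : ∫⁻ z in B, g z = 0 := by
          have : ∫⁻ z in B, g z = ∫⁻ _ in B, (0:ℝ≥0∞) := by
            refine setLIntegral_congr_fun hBm (fun z hz => ?_)
            simp only [hg]
            rw [if_neg (not_le.mpr (show (1:ℝ)/2 < ‖z‖ from hz)), ENNReal.ofReal_zero]
          rw [this, lintegral_zero]
        have hZ0 : ∫⁻ z in ({0} : Set (E n)), g z = 0 := by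
          have : ∫⁻ z in ({0} : Set (E n)), g z = ∫⁻ _ in ({0} : Set (E n)), (0:ℝ≥0∞) := by
            refine setLIntegral_congr_fun (measurableSet_singleton _)
              (fun z hz => ?_)
            simp only [Set.mem_singleton_iff] at hz
            subst hz
            simp only [hg, norm_zero]
            rw [if_pos (by norm_num), Real.zero_rpow (neg_ne_zero.mpr (Nat.cast_ne_zero.mpr hn.ne')), zero_mul,
              ENNReal.ofReal_zero]
          rw [this, lintegral_zero]
        rw [hB0, hZ0, zero_add, zero_add]
        -- bound each annulus integral
        have key : ∀ j : ℕ, ∫⁻ z in A j, g z ≤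
            ENNReal.ofReal ((2^n * V * Real.log 2 ^ (-s)) * ((j:ℝ)+1) ^ (-s)) := by
          intro j
          have hxpos : (0:ℝ) < (1/2:ℝ)^(j+2) := by positivity
          have hlog2 : (0:ℝ) < Real.log 2 := Real.log_pos (by norm_num)
          have hLpos : (0:ℝ) < ((j:ℝ)+1) * Real.log 2 := by positivity
          have hbound : ∀ z ∈ A j, g z ≤
              ENNReal.ofReal (((1/2:ℝ)^(j+2)) ^ (-(n:ℝ)) * (((j:ℝ)+1) * Real.log 2) ^ (-s)) := by
            intro z hz
            obtain ⟨hz1, hz2⟩ := hz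
            have hzpos : 0 < ‖z‖ := lt_trans hxpos hz1
            have hle : ‖z‖ ≤ 1/2 := le_trans hz2 (by
              apply pow_le_of_le_one (by norm_num) (by norm_num); omega)
            rw [hg]
            simp only [if_pos hle]
            apply ENNReal.ofReal_le_ofReal
            have hlognn : 0 ≤ Real.log (1/‖z‖) :=
              Real.log_nonneg (by rw [le_div_iff₀ hzpos]; linarith)
            apply mul_le_mul
            · exact Real.rpow_le_rpow_of_nonpos hxpos hz1.le
                (neg_nonpos.mpr (Nat.cast_nonneg n))
            · apply Real.rpow_le_rpow_of_nonpos hLpos _ (by linarith)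
              have h2 : ((j:ℝ)+1) * Real.log 2 = Real.log ((2:ℝ)^(j+1)) := by
                rw [Real.log_pow]; push_cast; ring
              rw [h2]
              apply Real.log_le_log (by positivity)
              calc (2:ℝ)^(j+1) = ((1/2:ℝ)^(j+1))⁻¹ := by
                    rw [one_div, inv_pow, inv_inv]
                _ ≤ (‖z‖)⁻¹ := by
                    exact inv_anti₀ hzpos hz2
                _ = 1/‖z‖ := by rw [one_div]
            · exact Real.rpow_nonneg hlognn _
            · positivity
          calc ∫⁻ z in A j, g z ≤ ∫⁻ _ in A j,
                ENNReal.ofReal (((1/2:ℝ)^(j+2)) ^ (-(n:ℝ)) * (((j:ℝ)+1) * Real.log 2) ^ (-s)) :=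
                  setLIntegral_mono' (hAm j) hbound
            _ = ENNReal.ofReal (((1/2:ℝ)^(j+2)) ^ (-(n:ℝ)) * (((j:ℝ)+1) * Real.log 2) ^ (-s)) *
                  volume (A j) := setLIntegral_const _ _
            _ ≤ ENNReal.ofReal (((1/2:ℝ)^(j+2)) ^ (-(n:ℝ)) * (((j:ℝ)+1) * Real.log 2) ^ (-s)) *
                  ENNReal.ofReal (((1/2:ℝ)^(j+1))^n * V) := by
                  gcongr
                  have hsub : A j ⊆ Metric.closedBall 0 ((1/2:ℝ)^(j+1)) := by
                    intro z hz
                    simp only [Metric.mem_closedBall, dist_zero_right]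
                    exact hz.2
                  calc volume (A j) ≤ volume (Metric.closedBall (0:E n) ((1/2:ℝ)^(j+1))) :=
                        measure_mono hsub
                    _ = ENNReal.ofReal (((1/2:ℝ)^(j+1))^n * V) := by
                        rw [EuclideanSpace.volume_closedBall, Fintype.card_fin,
                          ← ENNReal.ofReal_pow (by positivity),
                          ← ENNReal.ofReal_mul (by positivity)]
            _ = ENNReal.ofReal ((2^n * V * Real.log 2 ^ (-s)) * ((j:ℝ)+1) ^ (-s)) := by
                  rw [← ENNReal.ofReal_mul (by positivity)]
                  congr 1
                  have e1 : (((j:ℝ)+1) * Real.log 2) ^ (-s)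
                      = ((j:ℝ)+1) ^ (-s) * Real.log 2 ^ (-s) :=
                    Real.mul_rpow (by positivity) hlog2.le
                  have e2 : ((1/2:ℝ)^(j+2)) ^ (-(n:ℝ)) * ((1/2:ℝ)^(j+1))^n = 2^n := by
                    have h3 : ((1/2:ℝ)^(j+1))^n = ((1/2:ℝ)^(j+2))^n * 2^n := by
                      rw [← mul_pow]
                      congr 1
                      rw [pow_succ]
                      ring
                    rw [h3, Real.rpow_neg hxpos.le, Real.rpow_natCast, ← mul_assoc,
                      inv_mul_cancel₀ (by positivity), one_mul]
                  calc ((1/2:ℝ)^(j+2)) ^ (-(n:ℝ)) * (((j:ℝ)+1) * Real.log 2) ^ (-s) *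
                        (((1/2:ℝ)^(j+1))^n * V)
                      = (((1/2:ℝ)^(j+2)) ^ (-(n:ℝ)) * ((1/2:ℝ)^(j+1))^n) * V *
                        (((j:ℝ)+1) ^ (-s) * Real.log 2 ^ (-s)) := by rw [e1]; ring
                    _ = (2^n * V * Real.log 2 ^ (-s)) * ((j:ℝ)+1) ^ (-s) := by rw [e2]; ring
        have hsum : Summable (fun j : ℕ => (2^n * V * Real.log 2 ^ (-s)) * ((j:ℝ)+1) ^ (-s)) := by
          apply Summable.mul_left
          have h1 : Summable (fun j : ℕ => (((j:ℝ))^s)⁻¹) := Real.summable_nat_rpow_inv.2 hs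
          have h2 := (summable_nat_add_iff 1).2 h1
          apply h2.congr
          intro j
          rw [Real.rpow_neg (by positivity)]
          push_cast
          rfl
        calc ∑' j, ∫⁻ z in A j, g z
            ≤ ∑' (j : ℕ), ENNReal.ofReal ((2^n * V * Real.log 2 ^ (-s)) * ((j:ℝ)+1) ^ (-s)) :=
              ENNReal.tsum_le_tsum key
          _ = ENNReal.ofReal (∑' (j : ℕ), (2^n * V * Real.log 2 ^ (-s)) * ((j:ℝ)+1) ^ (-s)) :=
              (ENNReal.ofReal_tsum_of_nonneg (fun j => by positivity) hsum).symm
          _ < ⊤ := ENNReal.ofReal_lt_top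

lemma pointwise_pow (n : ℕ) (hn : 0 < n) (p ε : ℝ) (hp : 0 < p) (hε : 0 < ε) (r : ℝ) (hr : 0 ≤ r) :
    (‖(if r ≤ 1/2 then r ^ (-(n:ℝ)/p) * Real.log (1/r) ^ (-(1+ε)/p) else 0)‖₊ : ℝ≥0∞) ^ p
      = ENNReal.ofReal (if r ≤ 1/2 then r ^ (-(n:ℝ)) * Real.log (1/r) ^ (-(1+ε)) else 0) := by
  by_cases hc : r ≤ 1/2
  · rw [if_pos hc, if_pos hc]
    rcases eq_or_lt_of_le hr with hr0 | hr0
    · rw [← hr0]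
      rw [Real.zero_rpow (by
        refine div_ne_zero ?_ (ne_of_gt hp)
        exact neg_ne_zero.mpr (Nat.cast_ne_zero.mpr hn.ne')), zero_mul,
        Real.zero_rpow (neg_ne_zero.mpr (Nat.cast_ne_zero.mpr hn.ne')), zero_mul,
        nnnorm_zero, ENNReal.coe_zero, ENNReal.ofReal_zero,
        ENNReal.zero_rpow_of_pos hp]
    · have hlognn : 0 ≤ Real.log (1/r) :=
        Real.log_nonneg (by rw [le_div_iff₀ hr0]; linarith)
      have hnn : 0 ≤ r ^ (-(n:ℝ)/p) * Real.log (1/r) ^ (-(1+ε)/p) :=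
        mul_nonneg (Real.rpow_nonneg hr _) (Real.rpow_nonneg hlognn _)
      rw [← enorm_eq_nnnorm, Real.enorm_eq_ofReal hnn, ENNReal.ofReal_rpow_of_nonneg hnn hp.le]
      congr 1
      rw [Real.mul_rpow (Real.rpow_nonneg hr _) (Real.rpow_nonneg hlognn _),
        ← Real.rpow_mul hr, ← Real.rpow_mul hlognn, div_mul_cancel₀ _ (ne_of_gt hp),
        div_mul_cancel₀ _ (ne_of_gt hp)]
  · rw [if_neg hc, if_neg hc, nnnorm_zero, ENNReal.coe_zero, ENNReal.zero_rpow_of_pos hp,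
      ENNReal.ofReal_zero]

lemma memLp_aux (m k n : ℕ) (hn : m + k = n) (hn0 : 0 < n) (p ε : ℝ) (hp : 1 < p) (hε : 0 < ε)
    (f : E m × E k → ℝ)
    (hf : ∀ y, f y = if Real.sqrt (‖y.1‖^2 + ‖y.2‖^2) ≤ 1/2 then
        Real.sqrt (‖y.1‖^2 + ‖y.2‖^2) ^ (-(n : ℝ)/p) *
          Real.log (1 / Real.sqrt (‖y.1‖^2 + ‖y.2‖^2)) ^ (-(1+ε)/p) else 0) :
    MemLp f (ENNReal.ofReal p) volume := by
  have hp0 : (0:ℝ) < p := lt_trans one_pos hp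
  have hρ : Continuous (fun y : E m × E k => Real.sqrt (‖y.1‖^2 + ‖y.2‖^2)) := by
    fun_prop
  have hh : Measurable (fun r : ℝ => if r ≤ 1/2 then
      r ^ (-(n : ℝ)/p) * Real.log (1/r) ^ (-(1+ε)/p) else 0) := by
    refine Measurable.ite (measurableSet_le measurable_id measurable_const) ?_ measurable_const
    exact (measurable_id.pow measurable_const).mul
      ((Real.measurable_log.comp (measurable_const.div measurable_id)).pow measurable_const)
  have hfm : Measurable f := by
    have : f = (fun r : ℝ => if r ≤ 1/2 then
        r ^ (-(n : ℝ)/p) * Real.log (1/r) ^ (-(1+ε)/p) else 0)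
        ∘ (fun y : E m × E k => Real.sqrt (‖y.1‖^2 + ‖y.2‖^2)) := funext fun y => hf y
    rw [this]; exact hh.comp hρ.measurable
  refine ⟨hfm.aestronglyMeasurable, ?_⟩
  rw [eLpNorm_eq_lintegral_rpow_enorm_toReal (ENNReal.ofReal_pos.mpr hp0).ne' ENNReal.ofReal_ne_top]
  simp only [ENNReal.toReal_ofReal hp0.le, enorm_eq_nnnorm]
  refine ENNReal.rpow_lt_top_of_nonneg (by positivity) ?_
  subst hn
  have heq : ∫⁻ y : E m × E k, ((‖f y‖₊ : ℝ≥0∞)) ^ p ∂volume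
      = ∫⁻ z : E (m+k), ENNReal.ofReal (if ‖z‖ ≤ 1/2 then
          ‖z‖ ^ (-((m+k : ℕ) : ℝ)) * Real.log (1/‖z‖) ^ (-(1+ε)) else 0) := by
    rw [← lintegral_radial m k (fun r => ENNReal.ofReal (if r ≤ 1/2 then
      r ^ (-((m+k : ℕ) : ℝ)) * Real.log (1/r) ^ (-(1+ε)) else 0))]
    refine lintegral_congr fun y => ?_
    rw [hf y]
    exact pointwise_pow (m+k) hn0 p ε hp0 hε _ (Real.sqrt_nonneg _)
  rw [heq]
  exact (finite_int (m+k) hn0 (1+ε) (by linarith)).ne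

lemma rho_cont (m k : ℕ) : Continuous (fun y : E m × E k => Real.sqrt (‖y.1‖^2 + ‖y.2‖^2)) := by
  fun_prop

lemma annulus_meas (m k : ℕ) (a b : ℝ) :
    MeasurableSet {y : E m × E k | a ≤ Real.sqrt (‖y.1‖^2 + ‖y.2‖^2) ∧
      Real.sqrt (‖y.1‖^2 + ‖y.2‖^2) ≤ b} := by
  have : {y : E m × E k | a ≤ Real.sqrt (‖y.1‖^2 + ‖y.2‖^2) ∧
      Real.sqrt (‖y.1‖^2 + ‖y.2‖^2) ≤ b}
      = (fun y : E m × E k => Real.sqrt (‖y.1‖^2 + ‖y.2‖^2)) ⁻¹' (Set.Icc a b) := rfl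
  rw [this]
  exact (isClosed_Icc.preimage (rho_cont m k)).measurableSet

lemma vol_annulus (m k : ℕ) (hmk : 0 < m + k) (r : ℝ) (hr0 : 0 < r) (hr1 : r ≤ 1/2) :
    ENNReal.ofReal ((Real.sqrt Real.pi ^ (m+k) / Real.Gamma ((m+k : ℕ)/2 + 1)) * r^(m+k) / 2)
      ≤ volume {y : E m × E k | r^2 ≤ Real.sqrt (‖y.1‖^2 + ‖y.2‖^2) ∧
          Real.sqrt (‖y.1‖^2 + ‖y.2‖^2) ≤ r} := by
  haveI : Nonempty (Fin (m+k)) := Fin.pos_iff_nonempty.mp hmk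
  rw [vol_radial m k (fun t => r^2 ≤ t ∧ t ≤ r) (annulus_meas m k _ _)]
  have hset : {z : E (m+k) | r^2 ≤ ‖z‖ ∧ ‖z‖ ≤ r}
      = Metric.closedBall (0 : E (m+k)) r \ Metric.ball (0 : E (m+k)) (r^2) := by
    ext z
    simp only [Set.mem_setOf_eq, Set.mem_diff, Metric.mem_closedBall, Metric.mem_ball,
      dist_zero_right, not_lt]
    tauto
  rw [hset, measure_diff]
  · rw [EuclideanSpace.volume_closedBall, EuclideanSpace.volume_ball, Fintype.card_fin,
      ← ENNReal.ofReal_pow hr0.le, ← ENNReal.ofReal_pow (by positivity),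
      ← ENNReal.ofReal_mul (by positivity), ← ENNReal.ofReal_mul (by positivity),
      ← ENNReal.ofReal_sub _ (by positivity)]
    apply ENNReal.ofReal_le_ofReal
    set V := Real.sqrt Real.pi ^ (m+k) / Real.Gamma ((m+k : ℕ)/2 + 1) with hV
    have hVpos : 0 < V := div_pos (pow_pos (Real.sqrt_pos.2 Real.pi_pos) _)
      (Real.Gamma_pos_of_pos (by positivity))
    have h1 : (r^2)^(m+k) = r^(m+k) * r^(m+k) := by
      rw [← pow_mul, two_mul, pow_add]
    have h2 : r^(m+k) ≤ 1/2 := by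
      calc r^(m+k) ≤ (1/2:ℝ)^(m+k) := pow_le_pow_left₀ hr0.le hr1 _
        _ ≤ 1/2 := pow_le_of_le_one (by norm_num) (by norm_num) hmk.ne'
    have h3 : 0 < r^(m+k) := pow_pos hr0 _
    rw [h1]
    have h4 : r^(m+k) * r^(m+k) * V ≤ r^(m+k) * (1/2) * V :=
      mul_le_mul_of_nonneg_right (mul_le_mul_of_nonneg_left h2 h3.le) hVpos.le
    nlinarith [h4]
  · exact Metric.ball_subset_closedBall.trans (Metric.closedBall_subset_closedBall
      (by nlinarith))
  · exact measurableSet_ball.nullMeasurableSet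
  · rw [EuclideanSpace.volume_ball]
    exact ENNReal.mul_ne_top (by simp [ENNReal.pow_ne_top]) ENNReal.ofReal_ne_top

lemma fst_le_rho (m k : ℕ) (y : E m × E k) :
    ‖y.1‖ ≤ Real.sqrt (‖y.1‖^2 + ‖y.2‖^2) := by
  have h := Real.sqrt_le_sqrt (show ‖y.1‖^2 ≤ ‖y.1‖^2 + ‖y.2‖^2 from
    le_add_of_nonneg_right (sq_nonneg _))
  rwa [Real.sqrt_sq (norm_nonneg _)] at h

lemma snd_le_rho (m k : ℕ) (y : E m × E k) :
    ‖y.2‖ ≤ Real.sqrt (‖y.1‖^2 + ‖y.2‖^2) := by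
  have h := Real.sqrt_le_sqrt (show ‖y.2‖^2 ≤ ‖y.1‖^2 + ‖y.2‖^2 from
    le_add_of_nonneg_left (sq_nonneg _))
  rwa [Real.sqrt_sq (norm_nonneg _)] at h

set_option maxHeartbeats 2000000 in
lemma lower_aux (n₁ n₂ m : ℕ) (hm : 0 < m) (h₁ : m ≤ n₁) (h₂ : m ≤ n₂)
    (p₁ p₂ q ε lam : ℝ) (hp₁ : 1 < p₁) (hp₂ : 1 < p₂) (hq0 : 0 < q) (hε : 0 < ε)
    (hhom : lam = n₁ * (1 - 1/p₁) + n₂ * (1 - 1/p₂) + m / q)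
    (f₁ : E m × E (n₁ - m) → ℝ) (f₂ : E m × E (n₂ - m) → ℝ)
    (hf₁ : ∀ y, f₁ y = if Real.sqrt (‖y.1‖^2 + ‖y.2‖^2) ≤ 1/2 then
        Real.sqrt (‖y.1‖^2 + ‖y.2‖^2) ^ (-(n₁ : ℝ)/p₁) *
          Real.log (1 / Real.sqrt (‖y.1‖^2 + ‖y.2‖^2)) ^ (-(1+ε)/p₁) else 0)
    (hf₂ : ∀ y, f₂ y = if Real.sqrt (‖y.1‖^2 + ‖y.2‖^2) ≤ 1/2 then
        Real.sqrt (‖y.1‖^2 + ‖y.2‖^2) ^ (-(n₂ : ℝ)/p₂) *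
          Real.log (1 / Real.sqrt (‖y.1‖^2 + ‖y.2‖^2)) ^ (-(1+ε)/p₂) else 0)
    (F : E m → ℝ≥0∞)
    (hF : ∀ x, F x = ∫⁻ y₁ : E m × E (n₁ - m), ∫⁻ y₂ : E m × E (n₂ - m),
        ENNReal.ofReal (f₁ y₁) * ENNReal.ofReal (f₂ y₂) *
        ENNReal.ofReal
          ((‖x - y₁.1‖ + ‖x - y₂.1‖ + ‖y₁.2‖ + ‖y₂.2‖) ^ (-lam)) ∂volume ∂volume) :
    ∃ c : ℝ, 0 < c ∧ ∀ x : E m, 0 < ‖x‖ → ‖x‖ ≤ 1/2 →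
      ENNReal.ofReal (c * ‖x‖ ^ (-(m : ℝ)/q) *
        Real.log (1/‖x‖) ^ (-(1+ε) * (1/p₁ + 1/p₂))) ≤ F x := by
  have hk₁ : m + (n₁ - m) = n₁ := Nat.add_sub_cancel' h₁
  have hk₂ : m + (n₂ - m) = n₂ := Nat.add_sub_cancel' h₂
  have hp₁0 : (0:ℝ) < p₁ := by linarith
  have hp₂0 : (0:ℝ) < p₂ := by linarith
  have hip₁ : 1/p₁ ≤ 1 := by rw [div_le_one hp₁0]; linarith
  have hip₂ : 1/p₂ ≤ 1 := by rw [div_le_one hp₂0]; linarith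
  have hlam0 : 0 ≤ lam := by
    rw [hhom]
    have t₁ : (0:ℝ) ≤ n₁ * (1 - 1/p₁) := mul_nonneg (Nat.cast_nonneg _) (by linarith)
    have t₂ : (0:ℝ) ≤ n₂ * (1 - 1/p₂) := mul_nonneg (Nat.cast_nonneg _) (by linarith)
    have t₃ : (0:ℝ) ≤ m / q := div_nonneg (Nat.cast_nonneg _) hq0.le
    linarith
  set V₁ : ℝ := Real.sqrt Real.pi ^ (m + (n₁ - m)) / Real.Gamma ((m + (n₁ - m) : ℕ)/2 + 1)
    with hV₁
  set V₂ : ℝ := Real.sqrt Real.pi ^ (m + (n₂ - m)) / Real.Gamma ((m + (n₂ - m) : ℕ)/2 + 1)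
    with hV₂
  have hV₁pos : 0 < V₁ := div_pos (pow_pos (Real.sqrt_pos.2 Real.pi_pos) _)
    (Real.Gamma_pos_of_pos (by positivity))
  have hV₂pos : 0 < V₂ := div_pos (pow_pos (Real.sqrt_pos.2 Real.pi_pos) _)
    (Real.Gamma_pos_of_pos (by positivity))
  set eL : ℝ := -(1+ε) * (1/p₁ + 1/p₂) with heL
  refine ⟨V₁ * V₂ / 4 * 6 ^ (-lam) * 2 ^ eL, by positivity, ?_⟩
  intro x hx0 hx2
  set r := ‖x‖ with hr
  set L := Real.log (1/r) with hL
  have hL2 : Real.log 2 ≤ L := by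
    rw [hL]
    apply Real.log_le_log (by norm_num)
    rw [le_div_iff₀ hx0]; linarith
  have hLpos : 0 < L := lt_of_lt_of_le (Real.log_pos (by norm_num)) hL2
  have hr2pos : (0:ℝ) < r^2 := by positivity
  have hr2r : r^2 ≤ r := by nlinarith
  -- the annuli
  set S₁ : Set (E m × E (n₁ - m)) := {y | r^2 ≤ Real.sqrt (‖y.1‖^2 + ‖y.2‖^2) ∧
    Real.sqrt (‖y.1‖^2 + ‖y.2‖^2) ≤ r} with hS₁
  set S₂ : Set (E m × E (n₂ - m)) := {y | r^2 ≤ Real.sqrt (‖y.1‖^2 + ‖y.2‖^2) ∧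
    Real.sqrt (‖y.1‖^2 + ‖y.2‖^2) ≤ r} with hS₂
  have hS₁m : MeasurableSet S₁ := annulus_meas m (n₁ - m) _ _
  have hS₂m : MeasurableSet S₂ := annulus_meas m (n₂ - m) _ _
  set S₁' : Set (E m × E (n₁ - m)) := S₁ \ {(x, 0)} with hS₁'
  have hS₁'m : MeasurableSet S₁' := hS₁m.diff (measurableSet_singleton _)
  -- constants
  set A₁ : ℝ := r ^ (-(n₁ : ℝ)/p₁) * (2*L) ^ (-(1+ε)/p₁) with hA₁
  set A₂ : ℝ := r ^ (-(n₂ : ℝ)/p₂) * (2*L) ^ (-(1+ε)/p₂) with hA₂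
  set K : ℝ := (6*r) ^ (-lam) with hK
  have hA₁pos : 0 < A₁ := mul_pos (Real.rpow_pos_of_pos hx0 _)
    (Real.rpow_pos_of_pos (by positivity) _)
  have hA₂pos : 0 < A₂ := mul_pos (Real.rpow_pos_of_pos hx0 _)
    (Real.rpow_pos_of_pos (by positivity) _)
  have hKpos : 0 < K := Real.rpow_pos_of_pos (by positivity) _
  -- pointwise lower bounds for f₁, f₂
  have flow : ∀ (n : ℕ) (p : ℝ), 0 < p → 1 < p →
      ∀ (y : E m × E (n - m)), y ∈ {y : E m × E (n - m) |
        r^2 ≤ Real.sqrt (‖y.1‖^2 + ‖y.2‖^2) ∧ Real.sqrt (‖y.1‖^2 + ‖y.2‖^2) ≤ r} →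
      r ^ (-(n : ℝ)/p) * (2*L) ^ (-(1+ε)/p) ≤
        (if Real.sqrt (‖y.1‖^2 + ‖y.2‖^2) ≤ 1/2 then
          Real.sqrt (‖y.1‖^2 + ‖y.2‖^2) ^ (-(n : ℝ)/p) *
            Real.log (1 / Real.sqrt (‖y.1‖^2 + ‖y.2‖^2)) ^ (-(1+ε)/p) else 0) := by
    intro n p hp0 hp1 y hy
    obtain ⟨hy1, hy2⟩ := hy
    set ρ := Real.sqrt (‖y.1‖^2 + ‖y.2‖^2) with hρ
    have hρpos : 0 < ρ := lt_of_lt_of_le hr2pos hy1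
    rw [if_pos (le_trans hy2 hx2)]
    have hρlt1 : ρ < 1 := lt_of_le_of_lt (le_trans hy2 hx2) (by norm_num)
    have hlogρpos : 0 < Real.log (1/ρ) := Real.log_pos (by
      rw [lt_div_iff₀ hρpos]; linarith)
    have hlogle : Real.log (1/ρ) ≤ 2*L := by
      have e1 : Real.log (1/ρ) ≤ Real.log (1/r^2) := by
        apply Real.log_le_log (by positivity)
        exact one_div_le_one_div_of_le hr2pos hy1
      have e2 : Real.log (1/r^2) = 2*L := by
        rw [hL, show (1:ℝ)/r^2 = (1/r)^2 by rw [div_pow, one_pow], Real.log_pow]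
        push_cast; ring
      linarith
    have hexp1 : -(n : ℝ)/p ≤ 0 :=
      div_nonpos_iff.mpr (Or.inr ⟨neg_nonpos.mpr (Nat.cast_nonneg _), hp0.le⟩)
    have hexp2 : -(1+ε)/p ≤ 0 :=
      div_nonpos_iff.mpr (Or.inr ⟨by linarith, hp0.le⟩)
    apply mul_le_mul
    · exact Real.rpow_le_rpow_of_nonpos hρpos hy2 hexp1
    · exact Real.rpow_le_rpow_of_nonpos hlogρpos hlogle hexp2
    · exact Real.rpow_nonneg (by positivity) _
    · exact Real.rpow_nonneg hρpos.le _
  -- kernel lower bound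
  have hker : ∀ y₁ ∈ S₁', ∀ y₂ ∈ S₂,
      K ≤ (‖x - y₁.1‖ + ‖x - y₂.1‖ + ‖y₁.2‖ + ‖y₂.2‖) ^ (-lam) := by
    intro y₁ hy₁ y₂ hy₂
    obtain ⟨⟨h11, h12⟩, hne⟩ := hy₁
    obtain ⟨h21, h22⟩ := hy₂
    set D := ‖x - y₁.1‖ + ‖x - y₂.1‖ + ‖y₁.2‖ + ‖y₂.2‖ with hD
    have hb1 : ‖y₁.1‖ ≤ r := le_trans (fst_le_rho _ _ _) h12
    have hb2 : ‖y₂.1‖ ≤ r := le_trans (fst_le_rho _ _ _) h22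
    have hb3 : ‖y₁.2‖ ≤ r := le_trans (snd_le_rho _ _ _) h12
    have hb4 : ‖y₂.2‖ ≤ r := le_trans (snd_le_rho _ _ _) h22
    have hD6 : D ≤ 6*r := by
      have e1 : ‖x - y₁.1‖ ≤ r + r := le_trans (norm_sub_le _ _) (by rw [← hr]; linarith)
      have e2 : ‖x - y₂.1‖ ≤ r + r := le_trans (norm_sub_le _ _) (by rw [← hr]; linarith)
      rw [hD]; linarith
    have hDpos : 0 < D := by
      rcases eq_or_lt_of_le (norm_nonneg (x - y₁.1)) with hz1 | hz1
      · rcases eq_or_lt_of_le (norm_nonneg y₁.2) with hz2 | hz2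
        · exfalso
          apply hne
          have ex : y₁.1 = x := by
            have := norm_eq_zero.mp hz1.symm
            have : x - y₁.1 = 0 := this
            linear_combination (norm := module) -this
          have ey : y₁.2 = 0 := norm_eq_zero.mp hz2.symm
          simp only [Set.mem_singleton_iff]
          exact Prod.ext ex ey
        · have := norm_nonneg (x - y₁.1)
          have := norm_nonneg (x - y₂.1)
          have := norm_nonneg y₂.2
          rw [hD]; linarith
      · have := norm_nonneg (x - y₂.1)
        have := norm_nonneg y₁.2
        have := norm_nonneg y₂.2
        rw [hD]; linarith
    exact Real.rpow_le_rpow_of_nonpos hDpos hD6 (neg_nonpos.mpr hlam0)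
  -- assemble
  rw [hF x]
  have inner_bd : ∀ y₁ ∈ S₁',
      ENNReal.ofReal (A₁ * A₂ * K) * volume S₂ ≤
        ∫⁻ y₂ : E m × E (n₂ - m),
          ENNReal.ofReal (f₁ y₁) * ENNReal.ofReal (f₂ y₂) *
          ENNReal.ofReal
            ((‖x - y₁.1‖ + ‖x - y₂.1‖ + ‖y₁.2‖ + ‖y₂.2‖) ^ (-lam)) ∂volume := by
    intro y₁ hy₁
    calc ENNReal.ofReal (A₁ * A₂ * K) * volume S₂
        = ∫⁻ _ in S₂, ENNReal.ofReal (A₁ * A₂ * K) ∂volume := (setLIntegral_const _ _).symm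
      _ ≤ ∫⁻ y₂ in S₂, ENNReal.ofReal (f₁ y₁) * ENNReal.ofReal (f₂ y₂) *
            ENNReal.ofReal
              ((‖x - y₁.1‖ + ‖x - y₂.1‖ + ‖y₁.2‖ + ‖y₂.2‖) ^ (-lam)) ∂volume := by
          apply setLIntegral_mono' hS₂m
          intro y₂ hy₂
          rw [ENNReal.ofReal_mul (by positivity), ENNReal.ofReal_mul hA₁pos.le]
          have b1 : ENNReal.ofReal A₁ ≤ ENNReal.ofReal (f₁ y₁) := by
            apply ENNReal.ofReal_le_ofReal
            rw [hf₁ y₁]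
            exact flow n₁ p₁ hp₁0 hp₁ y₁ hy₁.1
          have b2 : ENNReal.ofReal A₂ ≤ ENNReal.ofReal (f₂ y₂) := by
            apply ENNReal.ofReal_le_ofReal
            rw [hf₂ y₂]
            exact flow n₂ p₂ hp₂0 hp₂ y₂ hy₂
          have b3 : ENNReal.ofReal K ≤ ENNReal.ofReal
              ((‖x - y₁.1‖ + ‖x - y₂.1‖ + ‖y₁.2‖ + ‖y₂.2‖) ^ (-lam)) :=
            ENNReal.ofReal_le_ofReal (hker y₁ hy₁ y₂ hy₂)
          exact mul_le_mul' (mul_le_mul' b1 b2) b3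
      _ ≤ _ := setLIntegral_le_lintegral _ _
  have outer_bd : (ENNReal.ofReal (A₁ * A₂ * K) * volume S₂) * volume S₁' ≤
      ∫⁻ y₁ : E m × E (n₁ - m), ∫⁻ y₂ : E m × E (n₂ - m),
        ENNReal.ofReal (f₁ y₁) * ENNReal.ofReal (f₂ y₂) *
        ENNReal.ofReal
          ((‖x - y₁.1‖ + ‖x - y₂.1‖ + ‖y₁.2‖ + ‖y₂.2‖) ^ (-lam)) ∂volume ∂volume := by
    calc (ENNReal.ofReal (A₁ * A₂ * K) * volume S₂) * volume S₁'
        = ∫⁻ _ in S₁', ENNReal.ofReal (A₁ * A₂ * K) * volume S₂ ∂volume :=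
          (setLIntegral_const _ _).symm
      _ ≤ ∫⁻ y₁ in S₁', ∫⁻ y₂ : E m × E (n₂ - m),
            ENNReal.ofReal (f₁ y₁) * ENNReal.ofReal (f₂ y₂) *
            ENNReal.ofReal
              ((‖x - y₁.1‖ + ‖x - y₂.1‖ + ‖y₁.2‖ + ‖y₂.2‖) ^ (-lam)) ∂volume ∂volume :=
          setLIntegral_mono' hS₁'m inner_bd
      _ ≤ _ := setLIntegral_le_lintegral _ _
  refine le_trans ?_ outer_bd
  -- volume estimates
  have hvolS₁' : ENNReal.ofReal (V₁ * r^(m + (n₁ - m)) / 2) ≤ volume S₁' := by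
    have h0 : volume ({((x : E m), (0 : E (n₁ - m)))} : Set (E m × E (n₁ - m))) = 0 := by
      have hsx : volume ({x} : Set (E m)) = 0 := by
        haveI : Nonempty (Fin m) := Fin.pos_iff_nonempty.mp hm
        exact measure_singleton x
      have : ({((x : E m), (0 : E (n₁ - m)))} : Set (E m × E (n₁ - m)))
          = {x} ×ˢ {(0 : E (n₁ - m))} := Set.singleton_prod_singleton.symm
      rw [this, Measure.volume_eq_prod, Measure.prod_prod, hsx, zero_mul]
    rw [hS₁', measure_diff_null h0]
    exact le_trans (le_of_eq (by rw [hV₁])) (vol_annulus m (n₁ - m) (by omega) r hx0 hx2)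
  have hvolS₂ : ENNReal.ofReal (V₂ * r^(m + (n₂ - m)) / 2) ≤ volume S₂ :=
    le_trans (le_of_eq (by rw [hV₂])) (vol_annulus m (n₂ - m) (by omega) r hx0 hx2)
  calc ENNReal.ofReal (V₁ * V₂ / 4 * 6 ^ (-lam) * 2 ^ eL * r ^ (-(m : ℝ)/q) * L ^ eL)
      = ENNReal.ofReal ((A₁ * A₂ * K) * (V₂ * r^(m + (n₂ - m)) / 2) *
          (V₁ * r^(m + (n₁ - m)) / 2)) := by
        congr 1
        -- the real computation
        have hc₁ : ((m + (n₁ - m) : ℕ) : ℝ) = (n₁ : ℝ) := by exact_mod_cast congrArg Nat.cast hk₁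
        have hc₂ : ((m + (n₂ - m) : ℕ) : ℝ) = (n₂ : ℝ) := by exact_mod_cast congrArg Nat.cast hk₂
        have hKsplit : K = 6 ^ (-lam) * r ^ (-lam) := by
          rw [hK, Real.mul_rpow (by norm_num) hx0.le]
        have h2L : (2*L) ^ (-(1+ε)/p₁) * (2*L) ^ (-(1+ε)/p₂) = 2 ^ eL * L ^ eL := by
          rw [← Real.rpow_add (by positivity), show -(1+ε)/p₁ + -(1+ε)/p₂ = eL by
            rw [heL]; ring, Real.mul_rpow (by norm_num) hLpos.le]
        have hrpows : r ^ (-(n₁ : ℝ)/p₁) * r ^ (-(n₂ : ℝ)/p₂) * r ^ (-lam) *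
            r ^ ((m + (n₂ - m) : ℕ) : ℝ) * r ^ ((m + (n₁ - m) : ℕ) : ℝ)
            = r ^ (-(m : ℝ)/q) := by
          rw [← Real.rpow_add hx0, ← Real.rpow_add hx0, ← Real.rpow_add hx0,
            ← Real.rpow_add hx0]
          congr 1
          rw [hc₁, hc₂, hhom]
          ring
        symm
        calc A₁ * A₂ * K * (V₂ * r^(m + (n₂ - m)) / 2) * (V₁ * r^(m + (n₁ - m)) / 2)
            = (r ^ (-(n₁ : ℝ)/p₁) * r ^ (-(n₂ : ℝ)/p₂) * r ^ (-lam) *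
                r ^ ((m + (n₂ - m) : ℕ) : ℝ) * r ^ ((m + (n₁ - m) : ℕ) : ℝ)) *
              ((2*L) ^ (-(1+ε)/p₁) * (2*L) ^ (-(1+ε)/p₂)) *
              (6 ^ (-lam) * (V₂/2) * (V₁/2)) := by
              rw [hA₁, hA₂, hKsplit, ← Real.rpow_natCast r (m + (n₂ - m)),
                ← Real.rpow_natCast r (m + (n₁ - m))]
              ring
          _ = V₁ * V₂ / 4 * 6 ^ (-lam) * 2 ^ eL * r ^ (-(m : ℝ)/q) * L ^ eL := by
              rw [hrpows, h2L]; ring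
    _ ≤ ENNReal.ofReal (A₁ * A₂ * K) * ENNReal.ofReal (V₂ * r^(m + (n₂ - m)) / 2) *
          ENNReal.ofReal (V₁ * r^(m + (n₁ - m)) / 2) := by
        rw [← ENNReal.ofReal_mul (by positivity), ← ENNReal.ofReal_mul (by positivity)]
    _ ≤ (ENNReal.ofReal (A₁ * A₂ * K) * volume S₂) * volume S₁' := by
        exact mul_le_mul' (mul_le_mul' le_rfl hvolS₂) hvolS₁'

set_option maxHeartbeats 1000000 in
lemma div_aux (m : ℕ) (hm : 0 < m) (c θ : ℝ) (hc : 0 < c) (hθ0 : 0 ≤ θ) (hθ : θ < 1)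
    (δ : ℝ) (hδ0 : 0 < δ) (hδ2 : δ ≤ 1/2) (G : E m → ℝ≥0∞)
    (hG : ∀ x : E m, 0 < ‖x‖ → ‖x‖ ≤ δ →
      ENNReal.ofReal (c * ‖x‖ ^ (-(m:ℝ)) * Real.log (1/‖x‖) ^ (-θ)) ≤ G x) :
    ∫⁻ x : E m, G x ∂volume = ⊤ := by
  haveI : Nonempty (Fin m) := Fin.pos_iff_nonempty.mp hm
  set V : ℝ := Real.sqrt Real.pi ^ m / Real.Gamma ((m : ℕ)/2 + 1) with hV
  have hVpos : 0 < V := div_pos (pow_pos (Real.sqrt_pos.2 Real.pi_pos) _)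
    (Real.Gamma_pos_of_pos (by positivity))
  have hlog2 : (0:ℝ) < Real.log 2 := Real.log_pos (by norm_num)
  have hlogδ : Real.log 2 ≤ Real.log (1/δ) := by
    apply Real.log_le_log (by norm_num)
    rw [le_div_iff₀ hδ0]; linarith
  set B : ℝ := Real.log (1/δ) + Real.log 2 with hB
  have hBpos : 0 < B := by rw [hB]; linarith
  have hB1 : 1 ≤ B := by
    have := Real.log_two_gt_d9
    rw [hB]; linarith
  set C : ℝ := c * V / (2 * B) with hC
  have hCpos : 0 < C := by positivity
  set A : ℕ → Set (E m) := fun j =>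
    (fun x : E m => ‖x‖) ⁻¹' (Set.Ioc (δ*(1/2)^(j+1)) (δ*(1/2)^j)) with hA
  have hAm : ∀ j, MeasurableSet (A j) := fun j => measurable_norm measurableSet_Ioc
  have hdisj' : ∀ i j : ℕ, i < j → Disjoint (A i) (A j) := by
    intro i j hij
    apply Disjoint.preimage
    rw [Set.Ioc_disjoint_Ioc]
    have h1 : δ*(1/2:ℝ)^j ≤ δ*(1/2)^(i+1) := by
      apply mul_le_mul_of_nonneg_left _ hδ0.le
      exact pow_le_pow_of_le_one (by norm_num) (by norm_num) (by omega)
    have h2 : δ*(1/2:ℝ)^j ≤ δ*(1/2)^j := le_refl _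
    refine le_trans (min_le_right _ _) (le_trans h1 (le_max_left _ _))
  have hdisj : Pairwise (Function.onFun Disjoint A) := fun i j hij =>
    hij.lt_or_gt.elim (hdisj' i j) (fun h => (hdisj' j i h).symm)
  -- volume of A j
  have hvol : ∀ j : ℕ, ENNReal.ofReal ((δ*(1/2)^j)^m * V / 2) ≤ volume (A j) := by
    intro j
    have hbpos : (0:ℝ) < δ*(1/2)^j := by positivity
    have hapos : (0:ℝ) < δ*(1/2)^(j+1) := by positivity
    have hab : δ*(1/2:ℝ)^(j+1) ≤ δ*(1/2)^j := by
      apply mul_le_mul_of_nonneg_left _ hδ0.le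
      exact pow_le_pow_of_le_one (by norm_num) (by norm_num) (by omega)
    have hset : A j = Metric.closedBall (0 : E m) (δ*(1/2)^j) \
        Metric.closedBall (0 : E m) (δ*(1/2)^(j+1)) := by
      ext z
      simp only [hA, Set.mem_preimage, Set.mem_Ioc, Set.mem_diff, Metric.mem_closedBall,
        dist_zero_right, not_le]
      tauto
    rw [hset, measure_diff (Metric.closedBall_subset_closedBall hab)
      measurableSet_closedBall.nullMeasurableSet
      (by rw [EuclideanSpace.volume_closedBall]
          exact ENNReal.mul_ne_top (by simp [ENNReal.pow_ne_top]) ENNReal.ofReal_ne_top),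
      EuclideanSpace.volume_closedBall, EuclideanSpace.volume_closedBall, Fintype.card_fin,
      ← ENNReal.ofReal_pow hbpos.le, ← ENNReal.ofReal_pow hapos.le,
      ← ENNReal.ofReal_mul (by positivity), ← ENNReal.ofReal_mul (by positivity),
      ← ENNReal.ofReal_sub _ (by positivity)]
    apply ENNReal.ofReal_le_ofReal
    have e1 : (δ*(1/2:ℝ)^(j+1))^m = (δ*(1/2)^j)^m * (1/2)^m := by
      rw [← mul_pow]
      congr 1
      rw [pow_succ]
      ring
    have e2 : ((1/2:ℝ))^m ≤ 1/2 := pow_le_of_le_one (by norm_num) (by norm_num) hm.ne'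
    have e3 : (0:ℝ) < (δ*(1/2)^j)^m := pow_pos hbpos m
    rw [e1]
    have e4 : (δ*(1/2:ℝ)^j)^m * (1/2)^m * V ≤ (δ*(1/2)^j)^m * (1/2) * V :=
      mul_le_mul_of_nonneg_right (mul_le_mul_of_nonneg_left e2 e3.le) hVpos.le
    nlinarith
  -- pointwise bound on A j
  have hterm : ∀ j : ℕ, ENNReal.ofReal (C * (1/((j:ℝ)+1))) ≤ ∫⁻ x in A j, G x ∂volume := by
    intro j
    have hbpos : (0:ℝ) < δ*(1/2)^j := by positivity
    have hpt : ∀ x ∈ A j, ENNReal.ofReal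
        (c * (δ*(1/2)^j) ^ (-(m:ℝ)) * (((j:ℝ)+1)*B) ^ (-(1:ℝ))) ≤ G x := by
      intro x hx
      obtain ⟨hx1, hx2⟩ := hx
      have hxpos : 0 < ‖x‖ := lt_trans (by positivity) hx1
      have hxδ : ‖x‖ ≤ δ := le_trans hx2 (by
        apply mul_le_of_le_one_right hδ0.le
        exact pow_le_one₀ (by norm_num) (by norm_num))
      refine le_trans (ENNReal.ofReal_le_ofReal ?_) (hG x hxpos hxδ)
      have hjB1 : (1:ℝ) ≤ ((j:ℝ)+1)*B := by
        have hj1 : (1:ℝ) ≤ (j:ℝ)+1 := by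
          have : (0:ℝ) ≤ (j:ℝ) := Nat.cast_nonneg j
          linarith
        nlinarith
      have hloglow : 0 < Real.log (1/‖x‖) := Real.log_pos (by
        rw [lt_div_iff₀ hxpos]; linarith)
      have hlogup : Real.log (1/‖x‖) ≤ ((j:ℝ)+1)*B := by
        have s1 : Real.log (1/‖x‖) ≤ Real.log (1/(δ*(1/2)^(j+1))) := by
          apply Real.log_le_log (by positivity)
          exact one_div_le_one_div_of_le (by positivity) hx1.le
        have s2 : Real.log (1/(δ*(1/2)^(j+1))) = Real.log (1/δ) + (j+1) * Real.log 2 := by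
          rw [one_div, mul_inv, Real.log_mul (by positivity) (by positivity), ← one_div,
            show ((1/2:ℝ)^(j+1))⁻¹ = (2:ℝ)^(j+1) by
              rw [one_div, inv_pow, inv_inv],
            Real.log_pow]
          push_cast; ring
        have s3 : Real.log (1/δ) + ((j:ℝ)+1) * Real.log 2 ≤ ((j:ℝ)+1)*B := by
          have hthis : Real.log (1/δ) ≤ ((j:ℝ)+1) * Real.log (1/δ) := by
            have : (0:ℝ) ≤ (j:ℝ) := Nat.cast_nonneg j
            apply le_mul_of_one_le_left (by linarith) (by linarith)
          have expand : ((j:ℝ)+1)*B = ((j:ℝ)+1)*Real.log (1/δ) + ((j:ℝ)+1)*Real.log 2 := by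
            rw [hB]; ring
          rw [expand]; linarith [hthis]
        calc Real.log (1/‖x‖) ≤ Real.log (1/(δ*(1/2)^(j+1))) := s1
          _ = Real.log (1/δ) + ((j:ℝ)+1) * Real.log 2 := s2
          _ ≤ ((j:ℝ)+1)*B := s3
      apply mul_le_mul
      · apply mul_le_mul_of_nonneg_left _ hc.le
        exact Real.rpow_le_rpow_of_nonpos hxpos hx2 (neg_nonpos.mpr (Nat.cast_nonneg _))
      · calc (((j:ℝ)+1)*B) ^ (-(1:ℝ)) ≤ (((j:ℝ)+1)*B) ^ (-θ) :=
              Real.rpow_le_rpow_of_exponent_le hjB1 (by linarith)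
          _ ≤ Real.log (1/‖x‖) ^ (-θ) :=
              Real.rpow_le_rpow_of_nonpos hloglow hlogup (neg_nonpos.mpr hθ0)
      · exact Real.rpow_nonneg (by positivity) _
      · positivity
    calc ENNReal.ofReal (C * (1/((j:ℝ)+1)))
        ≤ ENNReal.ofReal (c * (δ*(1/2)^j) ^ (-(m:ℝ)) * (((j:ℝ)+1)*B) ^ (-(1:ℝ))) *
            ENNReal.ofReal ((δ*(1/2)^j)^m * V / 2) := by
          rw [← ENNReal.ofReal_mul (by positivity)]
          apply ENNReal.ofReal_le_ofReal
          apply le_of_eq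
          have e5 : (δ*(1/2)^j) ^ (-(m:ℝ)) * (δ*(1/2)^j)^m = 1 := by
            rw [← Real.rpow_natCast (δ*(1/2)^j) m, ← Real.rpow_add hbpos]
            simp
          have e6 : (((j:ℝ)+1)*B) ^ (-(1:ℝ)) = (((j:ℝ)+1)*B)⁻¹ := Real.rpow_neg_one _
          have e7 : c * (δ*(1/2)^j) ^ (-(m:ℝ)) * (((j:ℝ)+1)*B)⁻¹ * ((δ*(1/2)^j)^m * V / 2)
              = c * ((δ*(1/2)^j) ^ (-(m:ℝ)) * (δ*(1/2)^j)^m) * V / 2 * (((j:ℝ)+1)*B)⁻¹ := by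
            ring
          rw [e6, e7, e5, mul_one, hC, mul_inv]
          have hj1 : ((j:ℝ)+1) ≠ 0 := by positivity
          field_simp
      _ ≤ ENNReal.ofReal (c * (δ*(1/2)^j) ^ (-(m:ℝ)) * (((j:ℝ)+1)*B) ^ (-(1:ℝ))) *
            volume (A j) := mul_le_mul' le_rfl (hvol j)
      _ = ∫⁻ _ in A j, ENNReal.ofReal
            (c * (δ*(1/2)^j) ^ (-(m:ℝ)) * (((j:ℝ)+1)*B) ^ (-(1:ℝ))) ∂volume :=
          (setLIntegral_const _ _).symm
      _ ≤ ∫⁻ x in A j, G x ∂volume := setLIntegral_mono' (hAm j) hpt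
  -- sum diverges
  have hsum_top : ∑' j : ℕ, ENNReal.ofReal (C * (1/((j:ℝ)+1))) = ⊤ := by
    by_contra h
    have h1 : Summable (fun j : ℕ => (C * (1/((j:ℝ)+1))).toNNReal) := by
      apply ENNReal.tsum_coe_ne_top_iff_summable.mp
      simpa [ENNReal.ofReal] using h
    have h2 : Summable (fun j : ℕ => C * (1/((j:ℝ)+1))) := by
      have := NNReal.summable_coe.mpr h1
      apply this.congr
      intro j
      rw [Real.coe_toNNReal _ (by positivity)]
    have h3 : Summable (fun j : ℕ => 1/((j:ℝ)+1)) := by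
      have := h2.mul_left C⁻¹
      apply this.congr
      intro j
      field_simp
    have h4 : Summable (fun j : ℕ => 1 / ((↑(j+1)):ℝ)) :=
      h3.congr (fun j => by push_cast; ring)
    exact Real.not_summable_one_div_natCast ((summable_nat_add_iff 1).mp h4)
  rw [← top_le_iff]
  calc (⊤:ℝ≥0∞) = ∑' j : ℕ, ENNReal.ofReal (C * (1/((j:ℝ)+1))) := hsum_top.symm
    _ ≤ ∑' j : ℕ, ∫⁻ x in A j, G x ∂volume := ENNReal.tsum_le_tsum hterm
    _ = ∫⁻ x in ⋃ j, A j, G x ∂volume := (lintegral_iUnion hAm hdisj _).symm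
    _ ≤ ∫⁻ x, G x ∂volume := setLIntegral_le_lintegral _ _

/-- The counterexample showing `1/q ≤ 1/p₁ + 1/p₂` is necessary in the full-rank
case: for `1 < p₁, p₂ < ∞`, `1/q > 1/p₁ + 1/p₂`, `λ = n₁/p₁' + n₂/p₂' + m/q`,
and `ε > 0` with `(1+ε)(1/p₁+1/p₂)q < 1`, the functions
`f_i(y_i) = χ_{|y_i|≤1/2} |y_i|^{−n_i/p_i}(log 1/|y_i|)^{−(1+ε)/p_i}` lie in
`L^{p_i}`, the bilinear integral `F` satisfies
`F(x) ≳ |x|^{−m/q}(log 1/|x|)^{−(1+ε)(1/p₁+1/p₂)}` for small `|x|`, and `F ∉ L^q`. -/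
theorem stmt17 (n₁ n₂ m : ℕ) (hm : 0 < m) (h₁ : m ≤ n₁) (h₂ : m ≤ n₂)
    (p₁ p₂ q ε lam : ℝ) (hp₁ : 1 < p₁) (hp₂ : 1 < p₂) (hq0 : 0 < q)
    (hqsum : 1/p₁ + 1/p₂ < 1/q) (hε : 0 < ε)
    (hεq : (1 + ε) * (1/p₁ + 1/p₂) * q < 1)
    (hhom : lam = n₁ * (1 - 1/p₁) + n₂ * (1 - 1/p₂) + m / q)
    (f₁ : E m × E (n₁ - m) → ℝ) (f₂ : E m × E (n₂ - m) → ℝ)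
    (hf₁ : ∀ y, f₁ y = if Real.sqrt (‖y.1‖^2 + ‖y.2‖^2) ≤ 1/2 then
        Real.sqrt (‖y.1‖^2 + ‖y.2‖^2) ^ (-(n₁ : ℝ)/p₁) *
          Real.log (1 / Real.sqrt (‖y.1‖^2 + ‖y.2‖^2)) ^ (-(1+ε)/p₁) else 0)
    (hf₂ : ∀ y, f₂ y = if Real.sqrt (‖y.1‖^2 + ‖y.2‖^2) ≤ 1/2 then
        Real.sqrt (‖y.1‖^2 + ‖y.2‖^2) ^ (-(n₂ : ℝ)/p₂) *
          Real.log (1 / Real.sqrt (‖y.1‖^2 + ‖y.2‖^2)) ^ (-(1+ε)/p₂) else 0)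
    (F : E m → ℝ≥0∞)
    (hF : ∀ x, F x = ∫⁻ y₁ : E m × E (n₁ - m), ∫⁻ y₂ : E m × E (n₂ - m),
        ENNReal.ofReal (f₁ y₁) * ENNReal.ofReal (f₂ y₂) *
        ENNReal.ofReal
          ((‖x - y₁.1‖ + ‖x - y₂.1‖ + ‖y₁.2‖ + ‖y₂.2‖) ^ (-lam)) ∂volume ∂volume) :
    MemLp f₁ (ENNReal.ofReal p₁) volume ∧ MemLp f₂ (ENNReal.ofReal p₂) volume ∧
    (∃ c : ℝ, 0 < c ∧ ∃ δ : ℝ, 0 < δ ∧ ∀ x : E m, 0 < ‖x‖ → ‖x‖ ≤ δ →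
      ENNReal.ofReal (c * ‖x‖ ^ (-(m : ℝ)/q) *
        Real.log (1/‖x‖) ^ (-(1+ε) * (1/p₁ + 1/p₂))) ≤ F x) ∧
    ∫⁻ x : E m, F x ^ q ∂volume = ⊤ := by
  have hp₁0 : (0:ℝ) < p₁ := by linarith
  have hp₂0 : (0:ℝ) < p₂ := by linarith
  obtain ⟨c, hc, hlow⟩ := lower_aux n₁ n₂ m hm h₁ h₂ p₁ p₂ q ε lam hp₁ hp₂ hq0 hε hhom
    f₁ f₂ hf₁ hf₂ F hF
  refine ⟨?_, ?_, ⟨c, hc, 1/2, by norm_num, fun x hx hx2 => hlow x hx hx2⟩, ?_⟩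
  · exact memLp_aux m (n₁ - m) n₁ (Nat.add_sub_cancel' h₁) (by omega) p₁ ε hp₁ hε f₁ hf₁
  · exact memLp_aux m (n₂ - m) n₂ (Nat.add_sub_cancel' h₂) (by omega) p₂ ε hp₂ hε f₂ hf₂
  · set θ : ℝ := (1+ε) * (1/p₁ + 1/p₂) * q with hθdef
    have hθ0 : 0 ≤ θ := by positivity
    apply div_aux m hm (c ^ q) θ (Real.rpow_pos_of_pos hc q) hθ0 hεq (1/2) (by norm_num)
      (le_refl _)
    intro x hx0 hxδ
    have hFlow := hlow x hx0 hxδ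
    have hL0 : (0:ℝ) ≤ Real.log (1/‖x‖) := Real.log_nonneg (by
      rw [le_div_iff₀ hx0]; linarith)
    have hbig0 : (0:ℝ) ≤ c * ‖x‖ ^ (-(m:ℝ)/q) * Real.log (1/‖x‖) ^ (-(1+ε) * (1/p₁ + 1/p₂)) :=
      mul_nonneg (mul_nonneg hc.le (Real.rpow_nonneg (norm_nonneg x) _))
        (Real.rpow_nonneg hL0 _)
    calc ENNReal.ofReal (c^q * ‖x‖ ^ (-(m:ℝ)) * Real.log (1/‖x‖) ^ (-θ))
        = ENNReal.ofReal ((c * ‖x‖ ^ (-(m:ℝ)/q) *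
            Real.log (1/‖x‖) ^ (-(1+ε) * (1/p₁ + 1/p₂))) ^ q) := by
          congr 1
          rw [Real.mul_rpow (mul_nonneg hc.le (Real.rpow_nonneg (norm_nonneg x) _))
              (Real.rpow_nonneg hL0 _),
            Real.mul_rpow hc.le (Real.rpow_nonneg (norm_nonneg x) _),
            ← Real.rpow_mul (norm_nonneg x), ← Real.rpow_mul hL0,
            show (-(m:ℝ)/q)*q = -(m:ℝ) from div_mul_cancel₀ _ (ne_of_gt hq0),
            show (-(1+ε) * (1/p₁ + 1/p₂))*q = -θ from by rw [hθdef]; ring]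
      _ = ENNReal.ofReal (c * ‖x‖ ^ (-(m:ℝ)/q) *
            Real.log (1/‖x‖) ^ (-(1+ε) * (1/p₁ + 1/p₂))) ^ q :=
          (ENNReal.ofReal_rpow_of_nonneg hbig0 hq0.le).symm
      _ ≤ F x ^ q := ENNReal.rpow_le_rpow hFlow hq0.le
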